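/- Let Z ⊆ [1, u] be a finite set of positive integers partitioned into Z = Z1 ∪ Z2 (disjoint), with max(Z) ≤ μu where μ ≤ 1/16, and let 0 ≤ ε ≤ 1/4. Then |S(Z1, (1+ε)u/2)| + |S(Z2, (1+ε)u/2)| ≤ (|S(Z, u)| + 1) / (1 − 2ε − 4μ). -/

import Mathlib

/-- `subsetSums X t` is the set of all subset sums of `X` (including the empty sum `0`)
that are at most the real bound `t`. -/
noncomputable def subsetSums (X : Finset ℕ) (t : ℝ) : Finset ℕ :=
  (X.powerset.image fun I => ∑ x ∈ I, x).filter fun s => (s : ℝ) ≤ t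

namespace SplitAux

open Finset

lemma sum_mem_subsetSums {X I : Finset ℕ} {t : ℝ} (hI : I ⊆ X)
    (h : ((∑ x ∈ I, x : ℕ) : ℝ) ≤ t) : (∑ x ∈ I, x) ∈ subsetSums X t := by
  simp only [subsetSums, Finset.mem_filter, Finset.mem_image]
  exact ⟨⟨I, Finset.mem_powerset.mpr hI, rfl⟩, h⟩

lemma le_of_mem_subsetSums {X : Finset ℕ} {t : ℝ} {s : ℕ} (h : s ∈ subsetSums X t) :
    (s : ℝ) ≤ t := (Finset.mem_filter.mp h).2

lemma exists_rep {X : Finset ℕ} {t : ℝ} {s : ℕ} (h : s ∈ subsetSums X t) :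
    ∃ I, I ⊆ X ∧ ∑ x ∈ I, x = s := by
  have := (Finset.mem_filter.mp h).1
  obtain ⟨I, hI, hIs⟩ := Finset.mem_image.mp this
  exact ⟨I, Finset.mem_powerset.mp hI, hIs⟩

lemma zero_mem_subsetSums (X : Finset ℕ) {t : ℝ} (h : (0:ℝ) ≤ t) :
    0 ∈ subsetSums X t := by
  have := sum_mem_subsetSums (X := X) (I := ∅) (t := t) (Finset.empty_subset X)
    (by simpa using h)
  simpa using this

lemma subsetSums_mono {X Y : Finset ℕ} {t t' : ℝ} (hXY : X ⊆ Y) (ht : t ≤ t') :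
    subsetSums X t ⊆ subsetSums Y t' := by
  intro s hs
  obtain ⟨I, hI, rfl⟩ := exists_rep hs
  exact sum_mem_subsetSums (hI.trans hXY) ((le_of_mem_subsetSums hs).trans ht)

lemma mem_le_sigma {X : Finset ℕ} {t : ℝ} {s : ℕ} (h : s ∈ subsetSums X t) :
    s ≤ ∑ x ∈ X, x := by
  obtain ⟨I, hI, rfl⟩ := exists_rep h
  exact Finset.sum_le_sum_of_subset hI

/-- Gap lemma: any real level `r ∈ [0, σ(X)]` is approximated from below within
`w = ` a bound on the elements of `X`, by a subset sum of `X`. -/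
lemma gap (X : Finset ℕ) (w : ℕ) (hw0 : 0 < w) (hXw : ∀ z ∈ X, z ≤ w)
    (hX1 : ∀ z ∈ X, 1 ≤ z) (r : ℝ)
    (hr0 : 0 ≤ r) (hrs : r ≤ ((∑ z ∈ X, z : ℕ) : ℝ)) :
    ∃ I, I ⊆ X ∧ r - w < ((∑ x ∈ I, x : ℕ) : ℝ) ∧ ((∑ x ∈ I, x : ℕ) : ℝ) ≤ r := by
  classical
  set P := X.powerset.filter (fun I => ((∑ x ∈ I, x : ℕ) : ℝ) ≤ r) with hP
  have hPne : P.Nonempty := ⟨∅, by simp [hP, hr0]⟩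
  obtain ⟨I, hIP, hImax⟩ := P.exists_max_image (fun I => ∑ x ∈ I, x) hPne
  have hIX : I ⊆ X := Finset.mem_powerset.mp (Finset.mem_filter.mp hIP).1
  have hIr : ((∑ x ∈ I, x : ℕ) : ℝ) ≤ r := (Finset.mem_filter.mp hIP).2
  refine ⟨I, hIX, ?_, hIr⟩
  by_contra hcon
  push_neg at hcon
  -- Σ I ≤ r - w
  have hwR : (0:ℝ) < w := by exact_mod_cast hw0
  have hIne : I ≠ X := by
    intro h
    subst h
    nlinarith [hcon, hrs]
  obtain ⟨z, hzX, hzI⟩ : ∃ z ∈ X, z ∉ I := by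
    by_contra h
    push_neg at h
    exact hIne (Finset.Subset.antisymm hIX h)
  have hzw : (z:ℝ) ≤ w := by exact_mod_cast hXw z hzX
  have hsum : (∑ x ∈ insert z I, x) = z + ∑ x ∈ I, x := Finset.sum_insert hzI
  have hcast : ((z + ∑ x ∈ I, x : ℕ) : ℝ) = (z:ℝ) + ((∑ x ∈ I, x : ℕ) : ℝ) := by
    push_cast; ring
  have hJP : insert z I ∈ P := by
    refine Finset.mem_filter.mpr ⟨Finset.mem_powerset.mpr ?_, ?_⟩
    · exact Finset.insert_subset hzX hIX
    · rw [hsum, hcast]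
      linarith [hcon, hzw]
  have hle := hImax _ hJP
  rw [hsum] at hle
  have hz1 : 1 ≤ z := hX1 z hzX
  omega


/-- There is a window `((k-1)L, kL]`, `1 ≤ k ≤ K`, containing at most `(|D|-1)/K`
elements of `D`. -/
lemma light_window (D : Finset ℕ) (h0 : 0 ∈ D) (L : ℝ) (hL : 0 < L) (K : ℕ) (hK : 1 ≤ K) :
    ∃ k, 1 ≤ k ∧ k ≤ K ∧
      K * (D.filter (fun x : ℕ => ((k:ℝ)-1)*L < (x:ℝ) ∧ (x:ℝ) ≤ (k:ℝ)*L)).card ≤ D.card - 1 := by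
  classical
  set S : ℕ → Finset ℕ :=
    fun k => D.filter (fun x : ℕ => ((k:ℝ)-1)*L < (x:ℝ) ∧ (x:ℝ) ≤ (k:ℝ)*L) with hS
  have hdisjS : ∀ j ∈ Finset.Icc 1 K, ∀ k ∈ Finset.Icc 1 K, j ≠ k → Disjoint (S j) (S k) := by
    intro j hj k hk hjk
    rw [Finset.disjoint_left]
    intro x hxj hxk
    simp only [hS, Finset.mem_filter] at hxj hxk
    rcases lt_or_gt_of_ne hjk with h | h
    · have h1 : (x:ℝ) ≤ (j:ℝ)*L := hxj.2.2
      have h2 : ((k:ℝ)-1)*L < (x:ℝ) := hxk.2.1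
      have hjk' : (j:ℝ) ≤ (k:ℝ) - 1 := by
        have : (j:ℝ) + 1 ≤ k := by exact_mod_cast h
        linarith
      nlinarith
    · have h1 : (x:ℝ) ≤ (k:ℝ)*L := hxk.2.2
      have h2 : ((j:ℝ)-1)*L < (x:ℝ) := hxj.2.1
      have hjk' : (k:ℝ) ≤ (j:ℝ) - 1 := by
        have : (k:ℝ) + 1 ≤ j := by exact_mod_cast h
        linarith
      nlinarith
  have hsub : (Finset.Icc 1 K).biUnion S ⊆ D.erase 0 := by
    intro x hx
    obtain ⟨k, hk, hxk⟩ := Finset.mem_biUnion.mp hx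
    simp only [hS, Finset.mem_filter] at hxk
    refine Finset.mem_erase.mpr ⟨?_, hxk.1⟩
    intro h0x
    subst h0x
    have hk1 : 1 ≤ k := (Finset.mem_Icc.mp hk).1
    have : (0:ℝ) ≤ ((k:ℝ)-1)*L := by
      apply mul_nonneg _ hL.le
      have : (1:ℝ) ≤ k := by exact_mod_cast hk1
      linarith
    have := hxk.2.1
    norm_num at this
    linarith
  have hsum : ∑ k ∈ Finset.Icc 1 K, (S k).card ≤ D.card - 1 := by
    rw [← Finset.card_biUnion hdisjS]
    calc ((Finset.Icc 1 K).biUnion S).card ≤ (D.erase 0).card := Finset.card_le_card hsub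
    _ = D.card - 1 := Finset.card_erase_of_mem h0
  obtain ⟨k, hk, hkmin⟩ := Finset.exists_min_image (Finset.Icc 1 K)
    (fun k => (S k).card) ⟨1, Finset.mem_Icc.mpr ⟨le_refl 1, hK⟩⟩
  obtain ⟨hk1, hkK⟩ := Finset.mem_Icc.mp hk
  refine ⟨k, hk1, hkK, ?_⟩
  show K * (S k).card ≤ D.card - 1
  have : K * (S k).card ≤ ∑ j ∈ Finset.Icc 1 K, (S j).card := by
    have hcard : (Finset.Icc 1 K).card = K := by rw [Nat.card_Icc]; omega
    calc K * (S k).card = ∑ _j ∈ Finset.Icc 1 K, (S k).card := by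
          rw [Finset.sum_const, hcard, smul_eq_mul]
    _ ≤ ∑ j ∈ Finset.Icc 1 K, (S j).card := Finset.sum_le_sum (fun j hj => hkmin j hj)
  omega

lemma filter_split3 (D : Finset ℕ) (p q : ℕ → Prop) [DecidablePred p] [DecidablePred q]
    (hpq : ∀ x, p x → q x) :
    (D.filter p).card + (D.filter (fun x => ¬ p x ∧ q x)).card
      + (D.filter (fun x => ¬ q x)).card = D.card := by
  classical
  have h1 : (D.filter p).card + (D.filter (fun x => ¬ p x)).card = D.card :=
    Finset.card_filter_add_card_filter_not (fun x => p x)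
  have h2 : ((D.filter (fun x => ¬ p x)).filter q).card
      + ((D.filter (fun x => ¬ p x)).filter (fun x => ¬ q x)).card
      = (D.filter (fun x => ¬ p x)).card :=
    Finset.card_filter_add_card_filter_not (fun x => q x)
  have e1 : (D.filter (fun x => ¬ p x)).filter q = D.filter (fun x => ¬ p x ∧ q x) := by
    rw [Finset.filter_filter]
  have e2 : (D.filter (fun x => ¬ p x)).filter (fun x => ¬ q x)
      = D.filter (fun x => ¬ q x) := by
    rw [Finset.filter_filter]
    apply Finset.filter_congr
    intro x _
    constructor
    · rintro ⟨_, h⟩; exact h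
    · intro h; exact ⟨fun hp => h (hpq x hp), h⟩
  rw [e1, e2] at h2
  omega


/-- Sum of a member of `S(Z1,·)` and a member of `S(Z2,·)` is a subset sum of `Z`. -/
lemma add_mem_subsetSums {Z Z1 Z2 : Finset ℕ} {t1 t2 : ℝ} {a b : ℕ} {u : ℕ}
    (hZ1 : Z1 ⊆ Z) (hZ2 : Z2 ⊆ Z) (hdisj : Disjoint Z1 Z2)
    (ha : a ∈ subsetSums Z1 t1) (hb : b ∈ subsetSums Z2 t2)
    (hub : ((a + b : ℕ) : ℝ) ≤ (u:ℝ)) : a + b ∈ subsetSums Z (u:ℝ) := by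
  obtain ⟨I, hI, rfl⟩ := exists_rep ha
  obtain ⟨J, hJ, rfl⟩ := exists_rep hb
  have hIJ : Disjoint I J := hdisj.mono hI hJ
  have hsum : ∑ x ∈ I ∪ J, x = (∑ x ∈ I, x) + ∑ x ∈ J, x := Finset.sum_union hIJ
  have := sum_mem_subsetSums (X := Z) (I := I ∪ J) (t := (u:ℝ))
    (Finset.union_subset (hI.trans hZ1) (hJ.trans hZ2)) (by rw [hsum]; exact_mod_cast hub)
  rwa [hsum] at this

lemma staircase (u : ℕ) (Z Z1 Z2 : Finset ℕ) (t : ℝ) (hZ1 : Z1 ⊆ Z) (hZ2 : Z2 ⊆ Z)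
    (hdisj : Disjoint Z1 Z2) (ht0 : 0 ≤ t) (htu : t ≤ (u:ℝ))
    (hfit : ∀ a ∈ subsetSums Z1 t, ∀ b ∈ subsetSums Z2 t, ((a + b : ℕ) : ℝ) ≤ (u:ℝ)) :
    (subsetSums Z1 t).card + (subsetSums Z2 t).card ≤ (subsetSums Z (u:ℝ)).card + 1 := by
  classical
  set A := subsetSums Z1 t with hA
  set B := subsetSums Z2 t with hB
  set C := subsetSums Z (u:ℝ) with hC
  have hAne : A.Nonempty := ⟨0, zero_mem_subsetSums _ ht0⟩
  set a0 := A.max' hAne with ha0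
  have ha0A : a0 ∈ A := A.max'_mem hAne
  set B' := B.image (fun b => a0 + b) with hB'
  have hB'card : B'.card = B.card := Finset.card_image_of_injective _ (add_right_injective a0)
  have hsub : A ∪ B' ⊆ C := by
    intro x hx
    rcases Finset.mem_union.mp hx with hxA | hxB'
    · exact subsetSums_mono hZ1 htu hxA
    · obtain ⟨b, hb, rfl⟩ := Finset.mem_image.mp hxB'
      exact add_mem_subsetSums hZ1 hZ2 hdisj ha0A hb (hfit a0 ha0A b hb)
  have hint : (A ∩ B') ⊆ {a0} := by
    intro x hx
    obtain ⟨hxA, hxB'⟩ := Finset.mem_inter.mp hx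
    obtain ⟨b, hb, rfl⟩ := Finset.mem_image.mp hxB'
    have h1 : a0 + b ≤ a0 := A.le_max' _ hxA
    have : b = 0 := by omega
    simp [this]
  have hintcard : (A ∩ B').card ≤ 1 := by
    calc (A ∩ B').card ≤ ({a0} : Finset ℕ).card := Finset.card_le_card hint
    _ = 1 := Finset.card_singleton a0
  have hkey := Finset.card_union_add_card_inter A B'
  have hCge : (A ∪ B').card ≤ C.card := Finset.card_le_card hsub
  omega


set_option maxHeartbeats 1000000 in
lemma core (u w : ℕ) (Z Z1 Z2 : Finset ℕ) (ε μ : ℝ)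
    (hZ1 : Z1 ⊆ Z) (hZ2 : Z2 ⊆ Z) (hdisj : Disjoint Z1 Z2)
    (hzw : ∀ z ∈ Z, z ≤ w) (hz1 : ∀ z ∈ Z, 1 ≤ z)
    (hε0 : 0 ≤ ε) (hε : ε ≤ 1/4)
    (hwμ : (w:ℝ) = μ * u) (hμ : μ ≤ 1/16) (hμ0 : 0 < μ)
    (hu : 0 < u) (hw32 : 32 ≤ w)
    (huσ : u < (∑ z ∈ Z1, z) + ∑ z ∈ Z2, z)
    (hσ2t : (u:ℝ) - (1+ε)*(u:ℝ)/2 < ((∑ z ∈ Z2, z : ℕ):ℝ))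
    (hor : (∑ z ∈ Z1, z) ≤ u ∨ u < ∑ z ∈ Z2, z)
    (hs : 2*ε + 4*μ < 1/2) :
    (((subsetSums Z1 ((1+ε)*(u:ℝ)/2)).card : ℝ) + ((subsetSums Z2 ((1+ε)*(u:ℝ)/2)).card : ℝ))
      * (1 - 2*ε - 4*μ) ≤ ((subsetSums Z (u:ℝ)).card : ℝ) + 1 := by
  classical
  set t : ℝ := (1+ε)*(u:ℝ)/2 with ht
  set A := subsetSums Z1 t with hAdef
  set B := subsetSums Z2 t with hBdef
  set C := subsetSums Z (u:ℝ) with hCdef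
  set D := A ∩ B with hDdef
  set σ1 := ∑ z ∈ Z1, z with hσ1def
  set σ2 := ∑ z ∈ Z2, z with hσ2def
  -- numeric groundwork
  have huR : (0:ℝ) < u := by exact_mod_cast hu
  have hwR : (32:ℝ) ≤ w := by exact_mod_cast hw32
  have hw0 : 0 < w := by omega
  have h16w : 16*(w:ℝ) ≤ u := by nlinarith [hwμ, hμ, huR]
  have hu512 : (512:ℝ) ≤ u := by nlinarith
  have ht0 : 0 ≤ t := by rw [ht]; positivity
  have h2t : 2*t = (u:ℝ) + ε*u := by rw [ht]; ring
  have htu : t ≤ (u:ℝ) := by nlinarith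
  set L : ℝ := ε*u + 2*w + 2 with hLdef
  clear_value t L
  have hL0 : (0:ℝ) < L := by
    rw [hLdef]
    have : (0:ℝ) ≤ (w:ℝ) := Nat.cast_nonneg w
    nlinarith [hε0, huR, this]

  have htL : L + ((u:ℝ)/4 - 2 - 2*w - 2) ≤ t := by rw [hLdef, ht]; nlinarith
  have htLpos : (0:ℝ) < t - L := by nlinarith
  have htL' : L ≤ t := by nlinarith
  set K := ⌊t/L⌋₊ with hKdef
  have hK1 : 1 ≤ K := Nat.le_floor (by rw [le_div_iff₀ hL0]; simpa using htL')
  have hKL : (K:ℝ)*L ≤ t := by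
    have h1 : (K:ℝ) ≤ t/L := Nat.floor_le (by positivity)
    calc (K:ℝ)*L ≤ (t/L)*L := by nlinarith
    _ = t := by field_simp
  have hKL2 : t - L < (K:ℝ)*L := by
    have h1 : t/L < (K:ℝ) + 1 := Nat.lt_floor_add_one _
    have h2 : t < ((K:ℝ)+1)*L := by
      calc t = (t/L)*L := by field_simp
      _ < ((K:ℝ)+1)*L := by nlinarith
    nlinarith
  -- zero in D
  have h0A : 0 ∈ A := zero_mem_subsetSums _ ht0
  have h0B : 0 ∈ B := zero_mem_subsetSums _ ht0
  have h0D : 0 ∈ D := Finset.mem_inter.mpr ⟨h0A, h0B⟩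
  -- lightest window
  obtain ⟨k, hk1, hkK, hkg⟩ := light_window D h0D L hL0 K hK1
  set g := (D.filter (fun x : ℕ => ((k:ℝ)-1)*L < (x:ℝ) ∧ (x:ℝ) ≤ (k:ℝ)*L)).card with hgdef
  set Dlo := D.filter (fun x : ℕ => (x:ℝ) ≤ ((k:ℝ)-1)*L) with hDlodef
  set Dhi := D.filter (fun x : ℕ => (k:ℝ)*L < (x:ℝ)) with hDhidef
  have hkR : (1:ℝ) ≤ (k:ℝ) := by exact_mod_cast hk1
  have hkKR : (k:ℝ) ≤ K := by exact_mod_cast hkK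
  have hkKL0 : (0:ℝ) ≤ ((K:ℝ) - k)*L := mul_nonneg (by linarith only [hkKR]) hL0.le
  have hk1L0 : (0:ℝ) ≤ ((k:ℝ) - 1)*L := mul_nonneg (by linarith only [hkR]) hL0.le
  have hkLt : (k:ℝ)*L ≤ t := by nlinarith [hkKL0, hKL]
  have hkLL : L ≤ (k:ℝ)*L := by nlinarith [hk1L0]
  have hsplit : Dlo.card + g + Dhi.card = D.card := by
    have hpq : ∀ xx : ℕ, ((xx:ℝ) ≤ ((k:ℝ)-1)*L) → ((xx:ℝ) ≤ (k:ℝ)*L) := by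
      intro xx hxx
      have : ((k:ℝ)-1)*L ≤ (k:ℝ)*L := by nlinarith [hL0]
      linarith only [hxx, this]
    have hsplit0 := filter_split3 D (fun x : ℕ => (x:ℝ) ≤ ((k:ℝ)-1)*L)
      (fun x : ℕ => (x:ℝ) ≤ (k:ℝ)*L) hpq
    simp only [not_le] at hsplit0
    rw [← hDlodef, ← hDhidef, ← hgdef] at hsplit0
    exact hsplit0
  -- rung for the high part
  have hZ2w : ∀ z ∈ Z2, z ≤ w := fun z hz => hzw z (hZ2 hz)
  have hZ21 : ∀ z ∈ Z2, 1 ≤ z := fun z hz => hz1 z (hZ2 hz)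
  have hut : (u:ℝ) - t < (σ2:ℝ) := hσ2t
  have hwR0 : (0:ℝ) ≤ (w:ℝ) := Nat.cast_nonneg w
  obtain ⟨I1, hI1, hy1a, hy1b⟩ := gap Z2 w hw0 hZ2w hZ21 (t + w - (k:ℝ)*L)
    (by linarith only [hkLt, hwR0]) (by linarith only [hkLL, hLdef, h2t, hut, hwR0])
  set y1 := ∑ x ∈ I1, x with hy1def
  have hy1B : y1 ∈ subsetSums Z2 (t + (w:ℝ) - (k:ℝ)*L) := sum_mem_subsetSums hI1 hy1b
  set himg := Dhi.image (fun x => x + y1) with hhimgdef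
  have hhcard : himg.card = Dhi.card :=
    Finset.card_image_of_injective _ (add_left_injective y1)
  have hhmem : ∀ s ∈ himg, s ∈ C ∧ t < (s:ℝ) ∧ (s:ℝ) ≤ 2*t + w - (k:ℝ)*L := by
    intro s hs'
    obtain ⟨x, hx, rfl⟩ := Finset.mem_image.mp hs'
    rw [hDhidef] at hx
    obtain ⟨hxD, hxk⟩ := Finset.mem_filter.mp hx
    have hxA : x ∈ A := (Finset.mem_inter.mp hxD).1
    have hxt : (x:ℝ) ≤ t := le_of_mem_subsetSums hxA
    have hcast : ((x + y1 : ℕ):ℝ) = (x:ℝ) + (y1:ℝ) := by push_cast; ring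
    have hub : ((x + y1 : ℕ):ℝ) ≤ (u:ℝ) := by
      rw [hcast]
      linarith only [hxt, hy1b, hkLL, hLdef, h2t, hwR0, hε0, huR]
    refine ⟨add_mem_subsetSums hZ1 hZ2 hdisj hxA hy1B hub, ?_, ?_⟩
    · rw [hcast]; linarith only [hxk, hy1a]
    · rw [hcast]; linarith only [hxt, hy1b]
  -- low part
  have hlow : ∃ limg : Finset ℕ, limg ⊆ C ∧ limg.card = Dlo.card ∧
      ∀ s ∈ limg, 2*t + (w:ℝ) - (k:ℝ)*L < (s:ℝ) := by
    have hDloA : ∀ x ∈ Dlo, x ∈ A ∧ (x:ℝ) ≤ ((k:ℝ)-1)*L := by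
      intro x hx
      rw [hDlodef] at hx
      obtain ⟨hxD, hxk⟩ := Finset.mem_filter.mp hx
      exact ⟨(Finset.mem_inter.mp hxD).1, hxk⟩
    rcases hor with hσ1u | hσ2u
    · -- pivot branch : σ1 ≤ u
      have hσ1uR : (σ1:ℝ) ≤ u := by exact_mod_cast hσ1u
      have huσR : (u:ℝ) < (σ1:ℝ) + σ2 := by exact_mod_cast huσ
      obtain ⟨I', hI', hy'a, hy'b⟩ := gap Z2 w hw0 hZ2w hZ21 ((u:ℝ) - σ1)
        (by linarith only [hσ1uR]) (by linarith only [huσR])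
      set y' := ∑ x ∈ I', x with hy'def
      set piv := σ1 + y' with hpivdef
      have hpivR1 : (u:ℝ) - w < (piv:ℝ) := by
        have hpc : (piv:ℝ) = (σ1:ℝ) + (y':ℝ) := by rw [hpivdef]; push_cast; ring
        rw [hpc]; linarith only [hy'a]
      have hpivR2 : (piv:ℝ) ≤ (u:ℝ) := by
        have hpc : (piv:ℝ) = (σ1:ℝ) + (y':ℝ) := by rw [hpivdef]; push_cast; ring
        rw [hpc]; linarith only [hy'b]
      refine ⟨Dlo.image (fun x => piv - x), ?_, ?_, ?_⟩
      · intro s hs'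
        obtain ⟨x, hx, rfl⟩ := Finset.mem_image.mp hs'
        obtain ⟨hxA, hxk⟩ := hDloA x hx
        have hxσ1 : x ≤ σ1 := mem_le_sigma hxA
        obtain ⟨Ix, hIx, hIxs⟩ := exists_rep hxA
        have hcompl : (∑ z ∈ Z1 \ Ix, z) + x = σ1 := by
          rw [← hIxs]
          exact Finset.sum_sdiff hIx
        have hcomplval : (∑ z ∈ Z1 \ Ix, z) = σ1 - x := by omega
        have hmem1 : (σ1 - x) ∈ subsetSums Z1 ((σ1:ℝ)) := by
          have := sum_mem_subsetSums (X := Z1) (I := Z1 \ Ix) (t := (σ1:ℝ))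
            Finset.sdiff_subset (by
              rw [hcomplval]
              exact_mod_cast Nat.cast_le.mpr (Nat.sub_le _ _))
          rwa [hcomplval] at this
        have hy'B : y' ∈ subsetSums Z2 ((u:ℝ) - σ1) := sum_mem_subsetSums hI' hy'b
        have hval : piv - x = (σ1 - x) + y' := by omega
        have hub : (((σ1 - x) + y' : ℕ):ℝ) ≤ (u:ℝ) := by
          have hc : (((σ1 - x) + y' : ℕ):ℝ) = ((σ1:ℝ) - x) + y' := by
            push_cast [hxσ1]; ring
          rw [hc]
          have hx0 : (0:ℝ) ≤ (x:ℝ) := Nat.cast_nonneg x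
          linarith only [hy'b, hx0]
        rw [hval]
        exact add_mem_subsetSums hZ1 hZ2 hdisj hmem1 hy'B hub
      · apply Finset.card_image_of_injOn
        intro x hx x' hx' hxx'
        have hxx2 : piv - x = piv - x' := hxx'
        have h1 : x ≤ σ1 := mem_le_sigma (hDloA x hx).1
        have h2 : x' ≤ σ1 := mem_le_sigma (hDloA x' hx').1
        omega
      · intro s hs'
        obtain ⟨x, hx, rfl⟩ := Finset.mem_image.mp hs'
        obtain ⟨hxA, hxk⟩ := hDloA x hx
        have hxσ1 : x ≤ σ1 := mem_le_sigma hxA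
        have hxpiv : x ≤ piv := by omega
        have hc : ((piv - x : ℕ):ℝ) = (piv:ℝ) - x := by push_cast [hxpiv]; ring
        rw [hc]
        linarith only [hpivR1, hxk, h2t, hLdef]
    · -- direct branch : u < σ2
      have hσ2uR : (u:ℝ) < (σ2:ℝ) := by exact_mod_cast hσ2u
      obtain ⟨I2, hI2, hy2a, hy2b⟩ := gap Z2 w hw0 hZ2w hZ21 ((u:ℝ) - ((k:ℝ)-1)*L)
        (by linarith only [hk1L0, hkLt, htu, hL0]) (by linarith only [hσ2uR, hk1L0])
      set y2 := ∑ x ∈ I2, x with hy2def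
      have hy2B : y2 ∈ subsetSums Z2 ((u:ℝ) - ((k:ℝ)-1)*L) := sum_mem_subsetSums hI2 hy2b
      refine ⟨Dlo.image (fun x => x + y2), ?_, ?_, ?_⟩
      · intro s hs'
        obtain ⟨x, hx, rfl⟩ := Finset.mem_image.mp hs'
        obtain ⟨hxA, hxk⟩ := hDloA x hx
        have hcast : ((x + y2 : ℕ):ℝ) = (x:ℝ) + (y2:ℝ) := by push_cast; ring
        have hub : ((x + y2 : ℕ):ℝ) ≤ (u:ℝ) := by
          rw [hcast]; linarith only [hxk, hy2b]
        exact add_mem_subsetSums hZ1 hZ2 hdisj hxA hy2B hub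
      · exact Finset.card_image_of_injective _ (add_left_injective y2)
      · intro s hs'
        obtain ⟨x, hx, rfl⟩ := Finset.mem_image.mp hs'
        obtain ⟨hxA, hxk⟩ := hDloA x hx
        have hcast : ((x + y2 : ℕ):ℝ) = (x:ℝ) + (y2:ℝ) := by push_cast; ring
        have hx0 : (0:ℝ) ≤ (x:ℝ) := Nat.cast_nonneg x
        rw [hcast]
        linarith only [hy2a, h2t, hLdef, hx0]
  obtain ⟨limg, hlsub, hlcard, hlbot⟩ := hlow
  -- assemble
  have hABsub : A ∪ B ⊆ C := by
    intro x hx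
    rcases Finset.mem_union.mp hx with h | h
    · exact subsetSums_mono hZ1 htu h
    · exact subsetSums_mono hZ2 htu h
  have hABt : ∀ s ∈ A ∪ B, (s:ℝ) ≤ t := by
    intro s hs'
    rcases Finset.mem_union.mp hs' with h | h
    · exact le_of_mem_subsetSums h
    · exact le_of_mem_subsetSums h
  have hd1 : Disjoint (A ∪ B) (himg ∪ limg) := by
    rw [Finset.disjoint_left]
    intro s hsAB hsIm
    have h1 : (s:ℝ) ≤ t := hABt s hsAB
    rcases Finset.mem_union.mp hsIm with h | h
    · have := (hhmem s h).2.1; linarith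
    · have := hlbot s h
      have hHitop : t ≤ 2*t + (w:ℝ) - (k:ℝ)*L := by linarith only [hkLt, hwR0]
      linarith only [h1, this, hHitop]
  have hd2 : Disjoint himg limg := by
    rw [Finset.disjoint_left]
    intro s hsh hsl
    have h1 := (hhmem s hsh).2.2
    have h2 := hlbot s hsl
    linarith
  have hUsub : (A ∪ B) ∪ (himg ∪ limg) ⊆ C := by
    intro s hs'
    rcases Finset.mem_union.mp hs' with h | h
    · exact hABsub h
    · rcases Finset.mem_union.mp h with h' | h'
      · exact (hhmem s h').1
      · exact hlsub h'
  have hUcard : ((A ∪ B) ∪ (himg ∪ limg)).card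
      = (A ∪ B).card + (Dhi.card + Dlo.card) := by
    rw [Finset.card_union_of_disjoint hd1, Finset.card_union_of_disjoint hd2,
      hhcard, hlcard]
  have hCineq : (A ∪ B).card + (Dhi.card + Dlo.card) ≤ C.card := by
    rw [← hUcard]; exact Finset.card_le_card hUsub
  have hABcard : (A ∪ B).card + D.card = A.card + B.card :=
    Finset.card_union_add_card_inter A B
  have hfinalN : A.card + B.card ≤ C.card + g := by omega
  -- real arithmetic finale
  have hdm : D.card ≤ A.card := Finset.card_le_card (Finset.inter_subset_left)
  have hdn : D.card ≤ B.card := Finset.card_le_card (Finset.inter_subset_right)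
  have hd0 : 1 ≤ D.card := Finset.card_pos.mpr ⟨0, h0D⟩
  -- G ≥ 0
  have hεlt : ε < 1/4 - 2*μ := by linarith
  have hG : 0 ≤ ε/2 - ε^2 - 6*ε*μ + μ/2 - 8*μ^2 := by
    have h1 : 0 ≤ ε * (1/2 - ε - 6*μ) := by
      apply mul_nonneg hε0
      linarith only [hεlt, hμ]
    have h2 : 0 ≤ μ * (1/2 - 8*μ) := by
      apply mul_nonneg hμ0.le
      linarith only [hμ]
    linarith only [h1, h2]
  have hid : (2*ε+4*μ)*(t - L) - L/2
      = (u:ℝ)*(ε/2 - ε^2 - 6*ε*μ + μ/2 - 8*μ^2) + (w:ℝ)/2 - 4*ε - 8*μ - 1 := by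
    rw [ht, hLdef, hwμ]; ring
  have hkey : L ≤ 2*(2*ε+4*μ)*(t - L) := by
    have h1 : 0 ≤ (u:ℝ)*(ε/2 - ε^2 - 6*ε*μ + μ/2 - 8*μ^2) := mul_nonneg huR.le hG
    linarith only [hid, h1, hwR, hε, hμ, hwμ]
  -- g ≤ (2ε+4μ)(m+n)
  have hKgR : (K:ℝ) * g ≤ (D.card:ℝ) - 1 := by
    have hn : K * g + 1 ≤ D.card := by omega
    have h2 : ((K * g + 1 : ℕ):ℝ) ≤ ((D.card : ℕ):ℝ) := by exact_mod_cast hn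
    push_cast at h2
    linarith only [h2]
  have h2d : 2 * (D.card:ℝ) ≤ (A.card:ℝ) + B.card := by
    have : 2 * D.card ≤ A.card + B.card := by omega
    exact_mod_cast this
  have hg0 : (0:ℝ) ≤ g := Nat.cast_nonneg g
  have hgB : (g:ℝ) ≤ (2*ε+4*μ) * ((A.card:ℝ) + B.card) := by
    have h1 : (g:ℝ) * (t - L) ≤ (g:ℝ) * ((K:ℝ)*L) := by
      apply mul_le_mul_of_nonneg_left hKL2.le hg0
    have h3 : ((K:ℝ)*g) * L ≤ ((D.card:ℝ) - 1) * L := by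
      apply mul_le_mul_of_nonneg_right hKgR hL0.le
    have h2dL : (2*(D.card:ℝ)) * L ≤ ((A.card:ℝ) + B.card) * L := by
      apply mul_le_mul_of_nonneg_right h2d hL0.le
    have h4 : 2*((g:ℝ)*(t - L)) ≤ ((A.card:ℝ) + B.card) * L := by
      linarith only [h1, h3, h2dL, hL0]
    have hmn0 : (0:ℝ) ≤ (A.card:ℝ) + B.card := by positivity
    have h5 : ((A.card:ℝ) + B.card) * L
        ≤ ((A.card:ℝ) + B.card) * (2*(2*ε+4*μ)*(t - L)) :=
      mul_le_mul_of_nonneg_left hkey hmn0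
    have h6 : (g:ℝ) * (2*(t - L)) ≤ ((2*ε+4*μ) * ((A.card:ℝ) + B.card)) * (2*(t - L)) := by
      linarith only [h4, h5]
    exact le_of_mul_le_mul_right h6 (by linarith only [htLpos])
  have hCfin : (A.card:ℝ) + B.card ≤ (C.card:ℝ) + g := by exact_mod_cast hfinalN
  linarith only [hgB, hCfin]



end SplitAux

open SplitAux Finset in
theorem subset_sums_splitting (u : ℕ) (hu : 0 < u) (Z Z1 Z2 : Finset ℕ)
    (hZ : Z ⊆ Finset.Icc 1 u) (hZne : Z.Nonempty)
    (hpart : Z = Z1 ∪ Z2) (hdisj : Disjoint Z1 Z2)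
    (μ ε : ℝ) (hμdef : μ = (Z.max' hZne : ℝ) / u) (hμ : μ ≤ 1 / 16)
    (hε0 : 0 ≤ ε) (hε : ε ≤ 1 / 4) :
    ((subsetSums Z1 ((1 + ε) * u / 2)).card + (subsetSums Z2 ((1 + ε) * u / 2)).card : ℝ) ≤
      ((subsetSums Z u).card + 1) / (1 - 2 * ε - 4 * μ) := by
  classical
  set w := Z.max' hZne with hwdef
  have hwZ : w ∈ Z := Z.max'_mem hZne
  have hw1 : 1 ≤ w := (Finset.mem_Icc.mp (hZ hwZ)).1
  have hwu : w ≤ u := (Finset.mem_Icc.mp (hZ hwZ)).2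
  have hzw : ∀ z ∈ Z, z ≤ w := fun z hz => Z.le_max' z hz
  have hz1 : ∀ z ∈ Z, 1 ≤ z := fun z hz => (Finset.mem_Icc.mp (hZ hz)).1
  have hZ1 : Z1 ⊆ Z := by rw [hpart]; exact Finset.subset_union_left
  have hZ2 : Z2 ⊆ Z := by rw [hpart]; exact Finset.subset_union_right
  have huR : (0:ℝ) < u := by exact_mod_cast hu
  have hwμ : (w:ℝ) = μ * u := by rw [hμdef]; field_simp
  have hw1R : (1:ℝ) ≤ (w:ℝ) := by exact_mod_cast hw1
  have hμ0 : 0 < μ := by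
    rw [hμdef]
    apply div_pos (by linarith) huR
  have hlam : 0 < 1 - 2*ε - 4*μ := by linarith
  rw [le_div_iff₀ hlam]
  set t : ℝ := (1 + ε) * (u:ℝ) / 2 with ht
  set A := subsetSums Z1 t with hA
  set B := subsetSums Z2 t with hB
  set C := subsetSums Z (u:ℝ) with hC
  have ht0 : 0 ≤ t := by rw [ht]; positivity
  have htu : t ≤ (u:ℝ) := by rw [ht]; nlinarith
  set σ1 := ∑ z ∈ Z1, z with hσ1
  set σ2 := ∑ z ∈ Z2, z with hσ2
  have hσsplit : ∑ z ∈ Z, z = σ1 + σ2 := by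
    rw [hpart]; exact Finset.sum_union hdisj
  -- counts
  have h0A : 0 ∈ A := zero_mem_subsetSums _ ht0
  have h0B : 0 ∈ B := zero_mem_subsetSums _ ht0
  have hm1 : 1 ≤ A.card := Finset.card_pos.mpr ⟨0, h0A⟩
  have hn1 : 1 ≤ B.card := Finset.card_pos.mpr ⟨0, h0B⟩
  have hABsub : A ∪ B ⊆ C := by
    intro x hx
    rcases Finset.mem_union.mp hx with h | h
    · exact subsetSums_mono hZ1 htu h
    · exact subsetSums_mono hZ2 htu h
  -- Case 1 : small intersection
  by_cases hcase1 : ((min A.card B.card : ℕ):ℝ)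
      ≤ (2*ε+4*μ)*((A.card:ℝ) + B.card) + 1
  · have hANcard : (A ∪ B).card + (A ∩ B).card = A.card + B.card :=
      Finset.card_union_add_card_inter A B
    have hdmin : (A ∩ B).card ≤ min A.card B.card := by
      refine le_min ?_ ?_
      · exact Finset.card_le_card Finset.inter_subset_left
      · exact Finset.card_le_card Finset.inter_subset_right
    have hCge : (A ∪ B).card ≤ C.card := Finset.card_le_card hABsub
    have hNge : A.card + B.card ≤ C.card + min A.card B.card := by omega
    have hNgeR : (A.card:ℝ) + B.card ≤ (C.card:ℝ) + ((min A.card B.card : ℕ):ℝ) := by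
      exact_mod_cast hNge
    linarith only [hNgeR, hcase1]
  push_neg at hcase1
  -- Case 2 : σ ≤ u
  have hstairwrap : A.card + B.card ≤ C.card + 1 →
      ((A.card:ℝ) + B.card) * (1 - 2*ε - 4*μ) ≤ (C.card:ℝ) + 1 := by
    intro hst
    have hstR : (A.card:ℝ) + B.card ≤ (C.card:ℝ) + 1 := by exact_mod_cast hst
    have hmn0 : (0:ℝ) ≤ (A.card:ℝ) + B.card := by
      have := Nat.cast_nonneg (α := ℝ) A.card; have := Nat.cast_nonneg (α := ℝ) B.card; linarith
    nlinarith [hε0, hμ0, hmn0, hstR]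
  by_cases hcase2 : (∑ z ∈ Z, z) ≤ u
  · apply hstairwrap
    apply staircase u Z Z1 Z2 t hZ1 hZ2 hdisj ht0 htu
    intro a ha b hb
    have h1 : a ≤ σ1 := mem_le_sigma ha
    have h2 : b ≤ σ2 := mem_le_sigma hb
    have : a + b ≤ u := by omega
    exact_mod_cast this
  push_neg at hcase2
  -- Case 3 : σ1 ≤ u - t
  by_cases hcase3 : (σ1:ℝ) ≤ (u:ℝ) - t
  · apply hstairwrap
    have hst := staircase u Z Z2 Z1 t hZ2 hZ1 hdisj.symm ht0 htu ?_
    · rw [← hA, ← hB, ← hC] at hst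
      omega
    · intro a ha b hb
      have h1 : (a:ℝ) ≤ t := le_of_mem_subsetSums ha
      have h2 : b ≤ σ1 := mem_le_sigma hb
      have h2R : (b:ℝ) ≤ (σ1:ℝ) := by exact_mod_cast h2
      have : ((a + b : ℕ):ℝ) = (a:ℝ) + b := by push_cast; ring
      rw [this]
      linarith only [h1, h2R, hcase3]
  push_neg at hcase3
  -- Case 4 : σ2 ≤ u - t
  by_cases hcase4 : (σ2:ℝ) ≤ (u:ℝ) - t
  · apply hstairwrap
    apply staircase u Z Z1 Z2 t hZ1 hZ2 hdisj ht0 htu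
    intro a ha b hb
    have h1 : (a:ℝ) ≤ t := le_of_mem_subsetSums ha
    have h2 : b ≤ σ2 := mem_le_sigma hb
    have h2R : (b:ℝ) ≤ (σ2:ℝ) := by exact_mod_cast h2
    have : ((a + b : ℕ):ℝ) = (a:ℝ) + b := by push_cast; ring
    rw [this]
    linarith only [h1, h2R, hcase4]
  push_neg at hcase4
  -- Hard case
  have hs : 2*ε + 4*μ < 1/2 := by
    have hminR : 2 * ((min A.card B.card : ℕ):ℝ) ≤ (A.card:ℝ) + B.card := by
      have : 2 * min A.card B.card ≤ A.card + B.card := by omega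
      exact_mod_cast this
    have hmn1 : (2:ℝ) ≤ (A.card:ℝ) + B.card := by
      have : 2 ≤ A.card + B.card := by omega
      exact_mod_cast this
    nlinarith [hcase1, hminR, hmn1]
  -- w ≥ 32
  have hZIcc : Z ⊆ Finset.Icc 1 w := by
    intro z hz
    exact Finset.mem_Icc.mpr ⟨hz1 z hz, hzw z hz⟩
  have hσw : ∑ z ∈ Z, z ≤ ∑ z ∈ Finset.Icc 1 w, z :=
    Finset.sum_le_sum_of_subset hZIcc
  have hgauss : (∑ z ∈ Finset.Icc 1 w, z) * 2 = w * (w+1) := by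
    have h0 : Finset.range (w+1) = insert 0 (Finset.Icc 1 w) := by
      ext x
      simp only [Finset.mem_range, Finset.mem_insert, Finset.mem_Icc]
      omega
    have h1 : ∑ z ∈ Finset.range (w+1), z = ∑ z ∈ Finset.Icc 1 w, z := by
      rw [h0, Finset.sum_insert (by simp)]
      omega
    rw [← h1, Finset.sum_range_id_mul_two (w+1)]
    simp only [Nat.add_sub_cancel]
    ring
  have h16w : 16 * w ≤ u := by
    have : 16*(w:ℝ) ≤ (u:ℝ) := by nlinarith [hwμ, hμ, huR]
    exact_mod_cast this
  have hw32 : 32 ≤ w := by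
    have hww : w * (w+1) = w*w + w := by ring
    have h31 : 31 * w < w * w := by omega
    by_contra hcon
    push_neg at hcon
    have : w * w ≤ w * 31 := Nat.mul_le_mul_left w (by omega)
    omega
  -- orientation and core
  have huσ : u < σ1 + σ2 := by omega
  by_cases hor1 : σ1 ≤ u
  · have hres := core u w Z Z1 Z2 ε μ hZ1 hZ2 hdisj hzw hz1 hε0 hε hwμ hμ hμ0 hu hw32
      huσ hcase4 (Or.inl hor1) hs
    rw [← ht, ← hA, ← hB, ← hC] at hres
    exact hres
  · push_neg at hor1
    by_cases hor2 : σ2 ≤ u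
    · have hres := core u w Z Z2 Z1 ε μ hZ2 hZ1 hdisj.symm hzw hz1 hε0 hε hwμ hμ hμ0 hu hw32
        (by omega) hcase3 (Or.inl hor2) hs
      rw [← ht, ← hB, ← hA, ← hC] at hres
      linarith only [hres]
    · push_neg at hor2
      have hres := core u w Z Z1 Z2 ε μ hZ1 hZ2 hdisj hzw hz1 hε0 hε hwμ hμ hμ0 hu hw32
        huσ hcase4 (Or.inr hor2) hs
      rw [← ht, ← hA, ← hB, ← hC] at hres
      exact hres
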